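/- arXiv:2502.08625 — 5 statements merged into one kernel-verified Lean document; each statement's English description precedes it below -/
import Mathlib

section
/- Universal matching property for OR interactions: Let w : Set N → ℝ be a function on subsets of a finite set N with w(∅) = 0, and define for each T ⊆ N the OR interaction I_or(T) = -∑_{L ⊆ T} (-1)^(|T|-|L|) · w(N \ L). Then for every S ⊆ N, w(S) = ∑_{T : T ∩ S ≠ ∅} I_or(T). -/
open Finset

lemma neg_one_pow_sum_real {α : Type*} [DecidableEq α] (A : Finset α) :
    ∑ X ∈ A.powerset, (-1 : ℝ) ^ X.card = if A = ∅ then 1 else 0 := by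
  have h := Finset.sum_pow_mul_eq_add_pow (-1 : ℝ) 1 A
  simp only [one_pow, mul_one] at h
  rw [h]
  simp only [neg_add_cancel]
  rcases eq_or_ne A (∅ : Finset α) with rfl | hA
  · simp
  · rw [if_neg hA, zero_pow]
    simpa [Finset.card_eq_zero] using hA

lemma key_moebius {N : Type*} [DecidableEq N] (U : Finset N) (f : Finset N → ℝ) :
    ∑ T ∈ U.powerset, ∑ L ∈ T.powerset, (-1 : ℝ) ^ (T.card - L.card) * f L = f U := by
  rw [Finset.sum_comm' (t' := U.powerset)
      (s' := fun L => U.powerset.filter (fun T => L ⊆ T))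
      (by intro T L; simp only [mem_powerset, mem_filter]; tauto)]
  have hinner : ∀ L ∈ U.powerset,
      ∑ T ∈ U.powerset.filter (fun T => L ⊆ T), (-1 : ℝ) ^ (T.card - L.card) * f L
        = (if L = U then 1 else 0) * f L := by
    intro L hL
    rw [mem_powerset] at hL
    have : ∑ T ∈ U.powerset.filter (fun T => L ⊆ T), (-1 : ℝ) ^ (T.card - L.card) * f L
        = ∑ X ∈ (U \ L).powerset, (-1 : ℝ) ^ X.card * f L := by
      apply Finset.sum_bij' (fun T _ => T \ L) (fun X _ => X ∪ L)
      · intro T hT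
        rw [mem_filter, mem_powerset] at hT
        rw [mem_powerset]
        exact sdiff_subset_sdiff hT.1 subset_rfl
      · intro X hX
        rw [mem_powerset] at hX
        rw [mem_filter, mem_powerset]
        constructor
        · exact union_subset (hX.trans (sdiff_subset)) hL
        · exact subset_union_right
      · intro T hT
        rw [mem_filter, mem_powerset] at hT
        exact sdiff_union_of_subset hT.2
      · intro X hX
        rw [mem_powerset, subset_sdiff] at hX
        rw [union_sdiff_right, sdiff_eq_self_of_disjoint hX.2]
      · intro T hT
        rw [mem_filter, mem_powerset] at hT
        rw [card_sdiff_of_subset hT.2]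
    rw [this, ← Finset.sum_mul, neg_one_pow_sum_real]
    by_cases h : L = U
    · subst h; simp
    · rw [if_neg (fun hc => h (subset_antisymm hL (Finset.sdiff_eq_empty_iff_subset.mp hc))),
        if_neg h]
  rw [Finset.sum_congr rfl hinner]
  simp only [ite_mul, zero_mul, one_mul]
  rw [Finset.sum_ite_eq' U.powerset U f]
  simp

theorem universal_matching_or_interactions
    {N : Type*} [Fintype N] [DecidableEq N] (w : Finset N → ℝ)
    (hw : w ∅ = 0) :
    ∀ S : Finset N,
      w S = ∑ T ∈ (Finset.univ : Finset N).powerset.filter (fun T => (T ∩ S).Nonempty),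
        (-(∑ L ∈ T.powerset, (-1 : ℝ) ^ (T.card - L.card) * w (Finset.univ \ L))) := by
  intro S
  set I : Finset N → ℝ := fun T =>
    -(∑ L ∈ T.powerset, (-1 : ℝ) ^ (T.card - L.card) * w (Finset.univ \ L)) with hI
  have htotal : ∑ T ∈ (Finset.univ : Finset N).powerset, I T = 0 := by
    simp only [hI, Finset.sum_neg_distrib]
    rw [key_moebius (Finset.univ : Finset N) (fun L => w (Finset.univ \ L))]
    simp [hw]
  have hcompl : (Finset.univ : Finset N).powerset.filter
      (fun T => ¬ (T ∩ S).Nonempty) = (Finset.univ \ S).powerset := by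
    ext T
    simp only [mem_filter, mem_powerset, Finset.not_nonempty_iff_eq_empty,
      ← Finset.disjoint_iff_inter_eq_empty, subset_sdiff]
  have hsplit := Finset.sum_filter_add_sum_filter_not
    (Finset.univ : Finset N).powerset (fun T => (T ∩ S).Nonempty) I
  rw [htotal, hcompl] at hsplit
  have h2 : ∑ T ∈ (Finset.univ \ S).powerset, I T = - w S := by
    simp only [hI, Finset.sum_neg_distrib]
    rw [key_moebius (Finset.univ \ S) (fun L => w (Finset.univ \ L))]
    simp
  rw [h2] at hsplit
  linarith
end

section
/- Universal matching of AND-OR interactions: Let N be a finite set and v : Set N → ℝ. Suppose u_and, u_or : Set N → ℝ satisfy u_and(L) + u_or(L) = v(L) for all L ⊆ N and u_or(∅) = 0. Define I_and(T) = ∑_{L ⊆ T} (-1)^(|T|-|L|) u_and(L) and I_or(T) = -∑_{L ⊆ T} (-1)^(|T|-|L|) u_or(N \ L). Then for every S ⊆ N, v(S) = v(∅) + ∑_{∅ ≠ T ⊆ S} I_and(T) + ∑_{T : T ∩ S ≠ ∅} I_or(T). -/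
open Finset

lemma sum_powerset_neg_one_pow_card_real {α : Type*} [DecidableEq α] (x : Finset α) :
    (∑ m ∈ x.powerset, (-1 : ℝ) ^ m.card) = if x = ∅ then 1 else 0 := by
  have h := Finset.sum_powerset_neg_one_pow_card (x := x)
  have h2 : (∑ m ∈ x.powerset, (-1 : ℝ) ^ m.card)
      = ((∑ m ∈ x.powerset, (-1 : ℤ) ^ m.card : ℤ) : ℝ) := by push_cast; rfl
  rw [h2, h]
  split_ifs <;> simp

lemma mobius_double_sum {N : Type*} [DecidableEq N] (f : Finset N → ℝ) (S : Finset N) :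
    ∑ T ∈ S.powerset, ∑ L ∈ T.powerset, (-1 : ℝ) ^ (T.card - L.card) * f L = f S := by
  have hrw : ∀ T ∈ S.powerset,
      ∑ L ∈ T.powerset, (-1 : ℝ) ^ (T.card - L.card) * f L
        = ∑ L ∈ S.powerset, if L ⊆ T then (-1 : ℝ) ^ (T.card - L.card) * f L else 0 := by
    intro T hT
    rw [mem_powerset] at hT
    have : T.powerset = S.powerset.filter (fun L => L ⊆ T) := by
      ext L
      simp only [mem_powerset, mem_filter]
      exact ⟨fun h => ⟨h.trans hT, h⟩, fun h => h.2⟩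
    rw [this, Finset.sum_filter]
  rw [Finset.sum_congr rfl hrw, Finset.sum_comm]
  have hinner : ∀ L ∈ S.powerset,
      (∑ T ∈ S.powerset, if L ⊆ T then (-1 : ℝ) ^ (T.card - L.card) * f L else 0)
        = (if S \ L = ∅ then 1 else 0) * f L := by
    intro L hL
    rw [mem_powerset] at hL
    rw [← Finset.sum_filter]
    have himg : S.powerset.filter (fun T => L ⊆ T) = (S \ L).powerset.image (fun A => L ∪ A) := by
      ext T
      simp only [mem_filter, mem_powerset, mem_image]
      constructor
      · rintro ⟨hTS, hLT⟩
        exact ⟨T \ L, sdiff_subset_sdiff hTS le_rfl, Finset.union_sdiff_of_subset hLT⟩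
      · rintro ⟨A, hA, rfl⟩
        exact ⟨Finset.union_subset hL ((hA.trans sdiff_subset)), Finset.subset_union_left⟩
    rw [himg, Finset.sum_image ?_]
    · have hcard : ∀ A ∈ (S \ L).powerset, ((L ∪ A).card - L.card) = A.card := by
        intro A hA
        rw [mem_powerset] at hA
        have hd : Disjoint L A := (disjoint_sdiff.mono_right hA)
        rw [Finset.card_union_of_disjoint hd]
        omega
      rw [Finset.sum_congr rfl (fun A hA => by rw [hcard A hA]), ← Finset.sum_mul,
        sum_powerset_neg_one_pow_card_real]
    · intro A hA B hB hAB
      rw [mem_coe, mem_powerset] at hA hB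
      have hdA : Disjoint L A := (disjoint_sdiff.mono_right hA)
      have hdB : Disjoint L B := (disjoint_sdiff.mono_right hB)
      have : (L ∪ A) \ L = (L ∪ B) \ L := by rw [show L ∪ A = L ∪ B from hAB]
      simpa [Finset.union_sdiff_left, Finset.sdiff_eq_self_of_disjoint hdA.symm,
        Finset.sdiff_eq_self_of_disjoint hdB.symm] using this
  rw [Finset.sum_congr rfl hinner]
  have : ∀ L ∈ S.powerset, (if S \ L = ∅ then 1 else 0) * f L = if L = S then f L else 0 := by
    intro L hL
    rw [mem_powerset] at hL
    by_cases h : L = S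
    · subst h; simp
    · have : S \ L ≠ ∅ := by
        rw [Ne, Finset.sdiff_eq_empty_iff_subset]
        exact fun hSL => h (Finset.Subset.antisymm hL hSL)
      simp [h, this]
  rw [Finset.sum_congr rfl this, Finset.sum_ite_eq' S.powerset S f]
  simp

theorem universal_matching_and_or_interactions
    {N : Type*} [Fintype N] [DecidableEq N]
    (v uand uor : Finset N → ℝ)
    (hdecomp : ∀ L : Finset N, uand L + uor L = v L)
    (hor_empty : uor ∅ = 0) :
    ∀ S : Finset N,
      v S = v ∅
        + ∑ T ∈ S.powerset.filter (fun T => T ≠ ∅),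
            (∑ L ∈ T.powerset, (-1 : ℝ) ^ (T.card - L.card) * uand L)
        + ∑ T ∈ (Finset.univ : Finset N).powerset.filter (fun T => (T ∩ S).Nonempty),
            (-(∑ L ∈ T.powerset, (-1 : ℝ) ^ (T.card - L.card) * uor (Finset.univ \ L))) := by
  intro S
  set g : Finset N → ℝ := fun T => ∑ L ∈ T.powerset, (-1 : ℝ) ^ (T.card - L.card) * uand L
    with hg
  set h : Finset N → ℝ := fun T => ∑ L ∈ T.powerset, (-1 : ℝ) ^ (T.card - L.card) * uor (Finset.univ \ L)
    with hh
  -- AND part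
  have hand : ∑ T ∈ S.powerset.filter (fun T => T ≠ ∅), g T = uand S - uand ∅ := by
    have htot : ∑ T ∈ S.powerset, g T = uand S := mobius_double_sum uand S
    have hsplit : ∑ T ∈ S.powerset, g T
        = g ∅ + ∑ T ∈ S.powerset.filter (fun T => T ≠ ∅), g T := by
      rw [← Finset.sum_filter_add_sum_filter_not S.powerset (fun T => T = ∅)]
      congr 1
      have : S.powerset.filter (fun T => T = ∅) = {∅} := by
        ext T
        simp only [mem_filter, mem_powerset, mem_singleton]
        exact ⟨fun h => h.2, fun h => ⟨h ▸ Finset.empty_subset S, h⟩⟩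
      rw [this, Finset.sum_singleton]
    have hge : g ∅ = uand ∅ := by simp [hg]
    rw [hsplit, hge] at htot
    linarith
  -- OR part
  have horS : ∑ T ∈ (Finset.univ \ S).powerset, h T = uor S := by
    have h1 := mobius_double_sum (fun L => uor (Finset.univ \ L)) (Finset.univ \ S)
    have h2 : (Finset.univ : Finset N) \ (Finset.univ \ S) = S := by simp
    rw [h2] at h1
    exact h1
  have horN : ∑ T ∈ (Finset.univ : Finset N).powerset, h T = 0 := by
    have := mobius_double_sum (fun L => uor (Finset.univ \ L)) (Finset.univ : Finset N)
    simpa [hor_empty] using this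
  have hsplit2 : ∑ T ∈ (Finset.univ : Finset N).powerset, h T
      = ∑ T ∈ (Finset.univ : Finset N).powerset.filter (fun T => (T ∩ S).Nonempty), h T
        + ∑ T ∈ (Finset.univ \ S).powerset, h T := by
    rw [← Finset.sum_filter_add_sum_filter_not (Finset.univ : Finset N).powerset
      (fun T => (T ∩ S).Nonempty)]
    congr 1
    apply Finset.sum_congr _ (fun _ _ => rfl)
    ext T
    simp only [mem_filter, mem_powerset, Finset.not_nonempty_iff_eq_empty]
    constructor
    · rintro ⟨-, hT⟩
      intro x hx
      simp only [Finset.mem_sdiff, Finset.mem_univ, true_and]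
      intro hxS
      have : x ∈ T ∩ S := Finset.mem_inter.2 ⟨hx, hxS⟩
      simp [hT] at this
    · intro hT
      refine ⟨Finset.subset_univ T, ?_⟩
      ext x
      simp only [Finset.mem_inter, Finset.notMem_empty, iff_false]
      rintro ⟨hxT, hxS⟩
      have := hT hxT
      simp only [Finset.mem_sdiff] at this
      exact this.2 hxS
  have hor : ∑ T ∈ (Finset.univ : Finset N).powerset.filter (fun T => (T ∩ S).Nonempty),
      (-(h T)) = uor S := by
    rw [Finset.sum_neg_distrib]
    have := hsplit2
    rw [horN, horS] at this
    linarith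
  have hve : uand ∅ = v ∅ := by rw [← hdecomp ∅, hor_empty, add_zero]
  have hvS := hdecomp S
  rw [hand]
  rw [hor]  -- may fail if terms not syntactically matching; adjust
  linarith
end

section
/- Symmetry axiom: if i, j ∈ N are such that v(S ∪ {i}) = v(S ∪ {j}) for all S ⊆ N \ {i, j}, then I_and(T ∪ {i}) = I_and(T ∪ {j}) for every T ⊆ N \ {i, j}. -/
theorem symmetry_axiom_harsanyi
    {N : Type*} [Fintype N] [DecidableEq N] (v : Finset N → ℝ) (i j : N)
    (hsym : ∀ S : Finset N, S ⊆ Finset.univ \ {i, j} →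
      v (S ∪ {i}) = v (S ∪ {j})) :
    ∀ T : Finset N, T ⊆ Finset.univ \ {i, j} →
      (∑ L ∈ (T ∪ {i}).powerset, (-1 : ℝ) ^ ((T ∪ {i}).card - L.card) * v L)
        = (∑ L ∈ (T ∪ {j}).powerset, (-1 : ℝ) ^ ((T ∪ {j}).card - L.card) * v L) := by
  intro T hT
  by_cases hij : i = j
  · subst hij; rfl
  have key : ∀ (s : Finset N) (a : N), s ∪ {a} = insert a s := fun s a => by
    rw [Finset.union_comm, ← Finset.insert_eq]
  have hiT : i ∉ T := fun h => by
    have := hT h; simp at this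
  have hjT : j ∉ T := fun h => by
    have := hT h; simp at this
  have hcard : (T ∪ {i}).card = (T ∪ {j}).card := by
    rw [key, key, Finset.card_insert_of_notMem hiT, Finset.card_insert_of_notMem hjT]
  refine Finset.sum_bij' (fun L _ => if i ∈ L then insert j (L.erase i) else L)
    (fun L _ => if j ∈ L then insert i (L.erase j) else L) ?_ ?_ ?_ ?_ ?_
  · intro L hL
    simp only [Finset.mem_powerset] at hL ⊢
    by_cases h : i ∈ L
    · simp only [h, if_pos]
      intro x hx
      rcases Finset.mem_insert.mp hx with rfl | hx
      · exact Finset.mem_union_right _ (Finset.mem_singleton_self _)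
      · have := hL (Finset.mem_of_mem_erase hx)
        rcases Finset.mem_union.mp this with h1 | h1
        · exact Finset.mem_union_left _ h1
        · exact absurd (Finset.mem_singleton.mp h1) (Finset.ne_of_mem_erase hx)
    · simp only [h, if_neg, not_false_iff]
      intro x hx
      rcases Finset.mem_union.mp (hL hx) with h1 | h1
      · exact Finset.mem_union_left _ h1
      · exact absurd h1 (by simp; rintro rfl; exact h hx)
  · intro L hL
    simp only [Finset.mem_powerset] at hL ⊢
    by_cases h : j ∈ L
    · simp only [h, if_pos]
      intro x hx
      rcases Finset.mem_insert.mp hx with rfl | hx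
      · exact Finset.mem_union_right _ (Finset.mem_singleton_self _)
      · have := hL (Finset.mem_of_mem_erase hx)
        rcases Finset.mem_union.mp this with h1 | h1
        · exact Finset.mem_union_left _ h1
        · exact absurd (Finset.mem_singleton.mp h1) (Finset.ne_of_mem_erase hx)
    · simp only [h, if_neg, not_false_iff]
      intro x hx
      rcases Finset.mem_union.mp (hL hx) with h1 | h1
      · exact Finset.mem_union_left _ h1
      · exact absurd h1 (by simp; rintro rfl; exact h hx)
  · intro L hL
    simp only [Finset.mem_powerset] at hL
    have hjL : j ∉ L := fun h => by
      rcases Finset.mem_union.mp (hL h) with h1 | h1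
      · exact hjT h1
      · exact hij (Finset.mem_singleton.mp h1).symm
    by_cases h : i ∈ L
    · simp [h, hjL, Ne.symm hij, Finset.erase_insert (by simp [hjL] : j ∉ L.erase i),
        Finset.insert_erase h, Finset.erase_eq_of_notMem]
    · simp [h, hjL]
  · intro L hL
    simp only [Finset.mem_powerset] at hL
    have hiL : i ∉ L := fun h => by
      rcases Finset.mem_union.mp (hL h) with h1 | h1
      · exact hiT h1
      · exact hij (Finset.mem_singleton.mp h1)
    by_cases h : j ∈ L
    · simp [h, hiL, hij, Finset.erase_insert (by simp [hiL] : i ∉ L.erase j),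
        Finset.insert_erase h, Finset.erase_eq_of_notMem]
    · simp [h, hiL]
  · intro L hL
    simp only [Finset.mem_powerset] at hL
    by_cases h : i ∈ L
    · simp only [h, if_pos]
      have hjLe : j ∉ L.erase i := fun hx => by
        rcases Finset.mem_union.mp (hL (Finset.mem_of_mem_erase hx)) with h1 | h1
        · exact hjT h1
        · exact hij (Finset.mem_singleton.mp h1).symm
      have hcardL : (insert j (L.erase i)).card = L.card := by
        rw [Finset.card_insert_of_notMem hjLe, Finset.card_erase_of_mem h,
          Nat.sub_add_cancel (Finset.card_pos.mpr ⟨i, h⟩)]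
      have hsub : L.erase i ⊆ Finset.univ \ {i, j} := fun x hx => by
        simp only [Finset.mem_sdiff, Finset.mem_univ, Finset.mem_insert,
          Finset.mem_singleton, true_and]
        push_neg
        exact ⟨Finset.ne_of_mem_erase hx, fun hxj => hjLe (hxj ▸ hx)⟩
      have hv : v L = v (insert j (L.erase i)) := by
        have := hsym (L.erase i) hsub
        rw [key, key, Finset.insert_erase h] at this
        exact this
      rw [hcard, hcardL, hv]
    · simp only [h, if_neg, not_false_iff, hcard]
end

section
/- Interaction distribution axiom: fix a nonempty T₀ ⊆ N and c ∈ ℝ, and define v_{T₀}(S) = c if T₀ ⊆ S and v_{T₀}(S) = 0 otherwise. Then I_and(T₀) = c, and I_and(S) = 0 for all S ≠ T₀. -/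
open Finset

lemma alt_sum_powerset {N : Type*} [DecidableEq N] (u : Finset N) :
    (∑ M ∈ u.powerset, (-1 : ℝ) ^ (u.card - M.card)) = if u = ∅ then 1 else 0 := by
  have h : ∀ M ∈ u.powerset, (-1 : ℝ) ^ (u.card - M.card)
      = (-1 : ℝ) ^ u.card * (-1 : ℝ) ^ M.card := by
    intro M hM
    have hle : M.card ≤ u.card := card_le_card (mem_powerset.1 hM)
    have : (-1 : ℝ) ^ (u.card - M.card) * (-1 : ℝ) ^ M.card = (-1 : ℝ) ^ u.card := by
      rw [← pow_add, Nat.sub_add_cancel hle]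
    calc (-1 : ℝ) ^ (u.card - M.card)
        = (-1 : ℝ) ^ (u.card - M.card) * ((-1 : ℝ) ^ M.card * (-1 : ℝ) ^ M.card) := by
          rw [← pow_add, ← two_mul, pow_mul]; norm_num
      _ = (-1 : ℝ) ^ u.card * (-1 : ℝ) ^ M.card := by rw [← mul_assoc, this]
  rw [Finset.sum_congr rfl h, ← Finset.mul_sum]
  have hz : (∑ M ∈ u.powerset, (-1 : ℝ) ^ M.card)
      = ((∑ M ∈ u.powerset, (-1 : ℤ) ^ M.card : ℤ) : ℝ) := by push_cast; rfl
  rw [hz, Finset.sum_powerset_neg_one_pow_card]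
  by_cases hu : u = ∅ <;> simp [hu]

lemma key_sum {N : Type*} [DecidableEq N] (T₀ : Finset N) (c : ℝ) (S : Finset N) :
    (∑ L ∈ S.powerset, (-1 : ℝ) ^ (S.card - L.card) * (if T₀ ⊆ L then c else 0))
      = if S = T₀ then c else 0 := by
  simp_rw [mul_ite, mul_zero]
  rw [Finset.sum_ite, Finset.sum_const_zero, add_zero]
  by_cases hTS : T₀ ⊆ S
  · have hbij : (∑ L ∈ S.powerset.filter (fun L => T₀ ⊆ L), (-1 : ℝ) ^ (S.card - L.card) * c)
        = ∑ M ∈ (S \ T₀).powerset, (-1 : ℝ) ^ ((S \ T₀).card - M.card) * c := by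
      apply Finset.sum_bij' (fun L _ => L \ T₀) (fun M _ => M ∪ T₀)
      · intro L hL
        simp only [mem_filter, mem_powerset] at hL
        exact mem_powerset.2 (sdiff_subset_sdiff hL.1 Subset.rfl)
      · intro M hM
        simp only [mem_powerset] at hM
        simp only [mem_filter, mem_powerset]
        exact ⟨union_subset (hM.trans sdiff_subset) hTS, subset_union_right⟩
      · intro L hL
        simp only [mem_filter, mem_powerset] at hL
        exact sdiff_union_of_subset hL.2
      · intro M hM
        simp only [mem_powerset] at hM
        have : Disjoint M T₀ := disjoint_of_subset_left hM (sdiff_disjoint)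
        rw [union_sdiff_right, sdiff_eq_self_of_disjoint this]
      · intro L hL
        simp only [mem_filter, mem_powerset] at hL
        have h1 : (L \ T₀).card = L.card - T₀.card := card_sdiff_of_subset hL.2
        have h2 : (S \ T₀).card = S.card - T₀.card := card_sdiff_of_subset hTS
        have h3 : T₀.card ≤ L.card := card_le_card hL.2
        have h4 : L.card ≤ S.card := card_le_card hL.1
        have : #S - #L = #(S \ T₀) - #(L \ T₀) := by rw [h1, h2]; omega
        rw [this]
    rw [hbij, ← Finset.sum_mul, alt_sum_powerset]
    by_cases h : S = T₀
    · simp [h]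
    · have hne : S \ T₀ ≠ ∅ := fun he => h (Finset.Subset.antisymm (sdiff_eq_empty_iff_subset.1 he) hTS)
      simp [hne, h]
  · have : S.powerset.filter (fun L => T₀ ⊆ L) = ∅ := by
      apply Finset.filter_eq_empty_iff.2
      intro L hL hTL
      exact hTS (hTL.trans (mem_powerset.1 hL))
    have hS : S ≠ T₀ := fun h => hTS (h ▸ Subset.rfl)
    simp [this, hS]

theorem interaction_distribution_axiom
    {N : Type*} [Fintype N] [DecidableEq N] (T₀ : Finset N) (hT₀ : T₀ ≠ ∅) (c : ℝ) :
    let vT : Finset N → ℝ := fun S => if T₀ ⊆ S then c else 0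
    (∑ L ∈ T₀.powerset, (-1 : ℝ) ^ (T₀.card - L.card) * vT L) = c ∧
      ∀ S : Finset N, S ≠ T₀ →
        (∑ L ∈ S.powerset, (-1 : ℝ) ^ (S.card - L.card) * vT L) = 0 := by
  intro vT
  constructor
  · rw [key_sum]; simp
  · intro S hS
    rw [key_sum]; simp [hS]
end

section
/- Given any function v : Set N → ℝ on a finite set N, and the Harsanyi interactions I_and, for every element i ∈ N we have ∑_{T ⊆ N, i ∈ T} I_and(T) = v(N) - v(N \ {i}). -/
open Finset

lemma alt_sum_supersets {N : Type*} [DecidableEq N] (M L : Finset N) (hL : L ⊆ M) :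
    ∑ S ∈ M.powerset.filter (fun S => L ⊆ S), (-1 : ℝ) ^ (S.card - L.card)
      = if L = M then 1 else 0 := by
  have hbij : ∑ S ∈ M.powerset.filter (fun S => L ⊆ S), (-1 : ℝ) ^ (S.card - L.card)
      = ∑ U ∈ (M \ L).powerset, (-1 : ℝ) ^ U.card := by
    refine Finset.sum_nbij' (fun S => S \ L) (fun U => U ∪ L) ?_ ?_ ?_ ?_ ?_
    · intro S hS
      simp only [mem_filter, mem_powerset] at hS
      exact mem_powerset.2 (sdiff_subset_sdiff hS.1 (le_refl _))
    · intro U hU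
      simp only [mem_powerset] at hU
      refine mem_filter.2 ⟨mem_powerset.2 (union_subset (hU.trans (sdiff_subset)) hL),
        subset_union_right⟩
    · intro S hS
      simp only [mem_filter, mem_powerset] at hS
      exact sdiff_union_of_subset hS.2
    · intro U hU
      simp only [mem_powerset] at hU
      have : Disjoint U L := disjoint_of_subset_left hU sdiff_disjoint
      show (U ∪ L) \ L = U
      simp [union_sdiff_distrib, sdiff_eq_self_of_disjoint this]
    · intro S hS
      simp only [mem_filter, mem_powerset] at hS
      congr 1
      exact (card_sdiff_of_subset hS.2).symm
  rw [hbij]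
  have := @Finset.sum_powerset_neg_one_pow_card N _ (M \ L)
  have hcast : ∑ U ∈ (M \ L).powerset, (-1 : ℝ) ^ U.card
      = ((∑ U ∈ (M \ L).powerset, (-1 : ℤ) ^ U.card : ℤ) : ℝ) := by
    push_cast; ring_nf
  rw [hcast, this]
  by_cases h : L = M
  · simp [h]
  · have : M \ L ≠ ∅ := by
      intro hc
      exact h (subset_antisymm hL (Finset.sdiff_eq_empty_iff_subset.mp hc))
    simp [this, h]

lemma mobius_inv {N : Type*} [DecidableEq N] (M : Finset N) (g : Finset N → ℝ) :
    ∑ S ∈ M.powerset, ∑ L ∈ S.powerset, (-1 : ℝ) ^ (S.card - L.card) * g L = g M := by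
  rw [Finset.sum_comm' (t' := M.powerset) (s' := fun L => M.powerset.filter (fun S => L ⊆ S))
    (by
      intro S L
      simp only [mem_powerset, mem_filter]
      constructor
      · rintro ⟨h1, h2⟩; exact ⟨⟨h1, h2⟩, h2.trans h1⟩
      · rintro ⟨⟨h1, h2⟩, _⟩; exact ⟨h1, h2⟩)]
  have : ∀ L ∈ M.powerset,
      ∑ S ∈ M.powerset.filter (fun S => L ⊆ S), (-1 : ℝ) ^ (S.card - L.card) * g L
        = (if L = M then 1 else 0) * g L := by
    intro L hL
    rw [← Finset.sum_mul, alt_sum_supersets M L (mem_powerset.mp hL)]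
  rw [Finset.sum_congr rfl this]
  simp [Finset.sum_ite_eq' M.powerset M, Finset.mem_powerset.2 (le_refl M)]

theorem sum_interactions_containing_i
    {N : Type*} [Fintype N] [DecidableEq N] (v : Finset N → ℝ) (i : N) :
    ∑ T ∈ (Finset.univ : Finset N).powerset.filter (fun T => i ∈ T),
        (∑ L ∈ T.powerset, (-1 : ℝ) ^ (T.card - L.card) * v L)
      = v Finset.univ - v (Finset.univ \ {i}) := by
  have key : ∑ T ∈ (Finset.univ : Finset N).powerset.filter (fun T => i ∈ T),
        (∑ L ∈ T.powerset, (-1 : ℝ) ^ (T.card - L.card) * v L)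
      = ∑ S ∈ ((Finset.univ : Finset N).erase i).powerset,
        (∑ L ∈ (insert i S).powerset, (-1 : ℝ) ^ ((insert i S).card - L.card) * v L) := by
    refine Finset.sum_nbij' (fun T => T.erase i) (fun S => insert i S) ?_ ?_ ?_ ?_ ?_
    · intro T hT
      simp only [mem_filter, mem_powerset] at hT
      exact mem_powerset.2 (erase_subset_erase i hT.1)
    · intro S hS
      simp only [mem_powerset] at hS
      refine mem_filter.2 ⟨mem_powerset.2 (subset_univ _), mem_insert_self i S⟩
    · intro T hT
      simp only [mem_filter, mem_powerset] at hT
      exact insert_erase hT.2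
    · intro S hS
      simp only [mem_powerset] at hS
      exact erase_insert (fun hc => (Finset.mem_erase.mp (hS hc)).1 rfl)
    · intro T hT
      simp only [mem_filter, mem_powerset] at hT
      rw [insert_erase hT.2]
  rw [key]
  have split : ∀ S ∈ ((Finset.univ : Finset N).erase i).powerset,
      (∑ L ∈ (insert i S).powerset, (-1 : ℝ) ^ ((insert i S).card - L.card) * v L)
        = ∑ L ∈ S.powerset, (-1 : ℝ) ^ (S.card - L.card) * (v (insert i L) - v L) := by
    intro S hS
    have hiS : i ∉ S := fun hc => (Finset.mem_erase.mp (mem_powerset.mp hS hc)).1 rfl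
    rw [powerset_insert, Finset.sum_union, Finset.sum_image]
    · have hcard : (insert i S).card = S.card + 1 := card_insert_of_notMem hiS
      have h1 : ∀ L ∈ S.powerset,
          (-1 : ℝ) ^ ((insert i S).card - L.card) * v L
            = -((-1 : ℝ) ^ (S.card - L.card) * v L) := by
        intro L hL
        have hLS : L.card ≤ S.card := card_le_card (mem_powerset.mp hL)
        rw [hcard, Nat.succ_sub hLS, pow_succ]
        ring
      have h2 : ∀ L ∈ S.powerset,
          (-1 : ℝ) ^ ((insert i S).card - (insert i L).card) * v (insert i L)
            = (-1 : ℝ) ^ (S.card - L.card) * v (insert i L) := by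
        intro L hL
        have hiL : i ∉ L := fun hc => hiS (mem_powerset.mp hL hc)
        rw [hcard, card_insert_of_notMem hiL, Nat.succ_sub_succ]
      rw [Finset.sum_congr rfl h1, Finset.sum_congr rfl h2, ← Finset.sum_add_distrib]
      apply Finset.sum_congr rfl
      intro L _
      ring
    · intro a ha b hb hab
      have hia : i ∉ a := fun hc => hiS (mem_powerset.mp ha hc)
      have hib : i ∉ b := fun hc => hiS (mem_powerset.mp hb hc)
      rw [← erase_insert hia, ← erase_insert hib, hab]
    · rw [Finset.disjoint_left]
      intro L hL hL2
      obtain ⟨a, _, rfl⟩ := Finset.mem_image.mp hL2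
      exact (fun hc => hiS (mem_powerset.mp hL hc)) (mem_insert_self i a)
  rw [Finset.sum_congr rfl split, mobius_inv]
  have h1 : insert i ((Finset.univ : Finset N).erase i) = Finset.univ :=
    insert_erase (mem_univ i)
  have h2 : (Finset.univ : Finset N).erase i = Finset.univ \ {i} :=
    (sdiff_singleton_eq_erase i univ).symm
  rw [h1, h2]
end
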